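/- arXiv:2102.13511 — 7 statements merged into one kernel-verified Lean document; each statement's English description precedes it below -/
import Mathlib

section
/- Let π be a group, γ, δ ∈ π, and S, T ⊆ π subsets. Then H_{γ,S} ∩ H_{δ,T} = H_{γ, S ∪ T ∪ {δ⁻¹γ}}. -/
/-- The diagonal homomorphism `π → π × π`. -/
def diagHom (π : Type*) [Group π] : π →* π × π :=
  MonoidHom.prod (MonoidHom.id π) (MonoidHom.id π)

/-- The subgroup `H_{γ,S} = (γ,e)·Δ(Z_π(S))·(γ⁻¹,e)` of `π × π`. -/
def Hsub {π : Type*} [Group π] (γ : π) (S : Set π) : Subgroup (π × π) :=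
  Subgroup.map (MulAut.conj ((γ, (1 : π)) : π × π)).toMonoidHom
    (Subgroup.map (diagHom π) (Subgroup.centralizer S))

lemma mem_Hsub {π : Type*} [Group π] (γ : π) (S : Set π) (x y : π) :
    (x, y) ∈ Hsub γ S ↔ y ∈ Subgroup.centralizer S ∧ x = γ * y * γ⁻¹ := by
  constructor
  · rintro ⟨q, ⟨z, hz, rfl⟩, h⟩
    simp only [MulEquiv.coe_toMonoidHom, MulAut.conj_apply, diagHom, MonoidHom.prod_apply,
      MonoidHom.id_apply, Prod.ext_iff, Prod.mk_mul_mk, Prod.inv_mk] at h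
    obtain ⟨h1, h2⟩ := h
    simp only [one_mul, mul_one, inv_one] at h1 h2
    subst h2
    exact ⟨hz, h1.symm⟩
  · rintro ⟨hz, rfl⟩
    exact ⟨(y, y), ⟨y, hz, rfl⟩, by
      simp [MulAut.conj, diagHom, Prod.ext_iff]⟩

/-- `H_{γ,S} ∩ H_{δ,T} = H_{γ, S ∪ T ∪ {δ⁻¹γ}}`. -/
theorem Hsub_inter {π : Type*} [Group π] (γ δ : π) (S T : Set π) :
    Hsub γ S ⊓ Hsub δ T = Hsub γ (S ∪ T ∪ {δ⁻¹ * γ}) := by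
  ext ⟨x, y⟩
  simp only [Subgroup.mem_inf, mem_Hsub, Subgroup.mem_centralizer_iff, Set.mem_union,
    Set.mem_singleton_iff]
  constructor
  · rintro ⟨⟨hS, rfl⟩, hT, heq⟩
    refine ⟨?_, rfl⟩
    rintro g ((h | h) | rfl)
    · exact hS g h
    · exact hT g h
    · have key : δ⁻¹ * (γ * y * γ⁻¹) * δ = y := by
        rw [heq]; group
      calc δ⁻¹ * γ * y = δ⁻¹ * (γ * y * γ⁻¹) * δ * (δ⁻¹ * γ) := by group
        _ = y * (δ⁻¹ * γ) := by rw [key]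
  · rintro ⟨hC, rfl⟩
    have hc := hC (δ⁻¹ * γ) (Or.inr rfl)
    refine ⟨⟨fun g h => hC g (Or.inl (Or.inl h)), rfl⟩,
      fun g h => hC g (Or.inl (Or.inr h)), ?_⟩
    calc γ * y * γ⁻¹ = δ * ((δ⁻¹ * γ) * y) * γ⁻¹ := by group
      _ = δ * (y * (δ⁻¹ * γ)) * γ⁻¹ := by rw [hc]
      _ = δ * y * δ⁻¹ := by group
end

section
/- Let π be a group, γ ∈ π, and S ⊆ π a subset. Then the normalizer of H_{γ,S} in π × π is N_{π×π}(H_{γ,S}) = {(γkhγ⁻¹, h) ∈ π × π | h ∈ N_π(Z_π(S)), k ∈ Z_π(Z_π(S))}, where N_π(−) denotes the normalizer in π. -/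
/-- `N_{π×π}(H_{γ,S}) = {(γkhγ⁻¹, h) | h ∈ N_π(Z_π(S)), k ∈ Z_π(Z_π(S))}`. -/
theorem Hsub_normalizer {π : Type*} [Group π] (γ : π) (S : Set π) :
    (Subgroup.normalizer ((Hsub γ S : Subgroup (π × π)) : Set (π × π)) : Set (π × π)) =
      {p : π × π | ∃ h k : π, h ∈ Subgroup.normalizer ((Subgroup.centralizer S : Subgroup π) : Set π) ∧
        k ∈ Subgroup.centralizer ((Subgroup.centralizer S : Subgroup π) : Set π) ∧
        p = (γ * k * h * γ⁻¹, h)} := by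
  ext ⟨p, q⟩
  simp only [SetLike.mem_coe, Set.mem_setOf_eq]
  constructor
  · intro hpq
    -- q normalizes the centralizer
    have hq : q ∈ Subgroup.normalizer ((Subgroup.centralizer S : Subgroup π) : Set π) := by
      rw [Subgroup.mem_normalizer_iff]
      intro c
      constructor
      · intro hc
        have := (Subgroup.mem_normalizer_iff.mp hpq (γ * c * γ⁻¹, c)).mp
          ((mem_Hsub γ S _ _).mpr ⟨hc, rfl⟩)
        exact ((mem_Hsub γ S _ _).mp this).1
      · intro hc
        have h2 := (Subgroup.mem_normalizer_iff.mp ((Subgroup.normalizer ((Hsub γ S : Subgroup (π × π)) : Set (π × π))).inv_mem hpq)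
          (γ * (q * c * q⁻¹) * γ⁻¹, q * c * q⁻¹)).mp
          ((mem_Hsub γ S _ _).mpr ⟨hc, rfl⟩)
        have h3 := ((mem_Hsub γ S _ _).mp h2).1
        simp only [Prod.snd_mul, Prod.snd_inv, Prod.inv_mk, inv_inv] at h3
        rwa [show q⁻¹ * (q * c * q⁻¹) * q = c from by group] at h3
    -- key conjugation identity
    have key : ∀ c ∈ Subgroup.centralizer S, p * (γ * c * γ⁻¹) * p⁻¹ = γ * (q * c * q⁻¹) * γ⁻¹ := by
      intro c hc
      have := (Subgroup.mem_normalizer_iff.mp hpq (γ * c * γ⁻¹, c)).mp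
        ((mem_Hsub γ S _ _).mpr ⟨hc, rfl⟩)
      have h4 := ((mem_Hsub γ S _ _).mp this).2
      simpa using h4
    refine ⟨q, γ⁻¹ * p * γ * q⁻¹, hq, ?_, ?_⟩
    · rw [Subgroup.mem_centralizer_iff]
      intro d hd
      rw [SetLike.mem_coe] at hd
      set c := q⁻¹ * d * q with hcdef
      have hc : c ∈ Subgroup.centralizer S := by
        apply (Subgroup.mem_normalizer_iff.mp hq (q⁻¹ * d * q)).mpr
        rwa [show q * (q⁻¹ * d * q) * q⁻¹ = d from by group]
      have hdc : q * c * q⁻¹ = d := by rw [hcdef]; group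
      have E := key c hc
      have E3 : p * γ * c = γ * (q * c * q⁻¹) * γ⁻¹ * (p * γ) := by
        rw [← E]; group
      calc d * (γ⁻¹ * p * γ * q⁻¹) = γ⁻¹ * (γ * (q * c * q⁻¹) * γ⁻¹ * (p * γ)) * q⁻¹ := by
              rw [← hdc]; group
        _ = γ⁻¹ * (p * γ * c) * q⁻¹ := by rw [E3]
        _ = (γ⁻¹ * p * γ * q⁻¹) * d := by rw [← hdc]; group
    · have : γ * (γ⁻¹ * p * γ * q⁻¹) * q * γ⁻¹ = p := by group
      rw [this]
  · rintro ⟨h, k, hh, hk, heq⟩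
    rw [heq, Subgroup.mem_normalizer_iff]
    rintro ⟨x, y⟩
    have hmul : ((γ * k * h * γ⁻¹, h) * (x, y) * (γ * k * h * γ⁻¹, h)⁻¹)
        = ((γ * k * h * γ⁻¹) * x * (γ * k * h * γ⁻¹)⁻¹, h * y * h⁻¹) := rfl
    rw [hmul, mem_Hsub, mem_Hsub]
    constructor
    · rintro ⟨hy, rfl⟩
      refine ⟨(Subgroup.mem_normalizer_iff.mp hh y).mp hy, ?_⟩
      have hyZ : h * y * h⁻¹ ∈ Subgroup.centralizer S := (Subgroup.mem_normalizer_iff.mp hh y).mp hy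
      have comm : (h * y * h⁻¹) * k = k * (h * y * h⁻¹) :=
        Subgroup.mem_centralizer_iff.mp hk _ (SetLike.mem_coe.mpr hyZ)
      calc (γ * k * h * γ⁻¹) * (γ * y * γ⁻¹) * (γ * k * h * γ⁻¹)⁻¹
          = γ * (k * (h * y * h⁻¹)) * k⁻¹ * γ⁻¹ := by group
        _ = γ * ((h * y * h⁻¹) * k) * k⁻¹ * γ⁻¹ := by rw [comm]
        _ = γ * (h * y * h⁻¹) * γ⁻¹ := by group
    · rintro ⟨hy', hx'⟩
      have hy : y ∈ Subgroup.centralizer S := by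
        have := (Subgroup.mem_normalizer_iff.mp hh y).mpr hy'
        exact this
      refine ⟨hy, ?_⟩
      have hyZ : h * y * h⁻¹ ∈ Subgroup.centralizer S := hy'
      have comm : (h * y * h⁻¹) * k = k * (h * y * h⁻¹) :=
        Subgroup.mem_centralizer_iff.mp hk _ (SetLike.mem_coe.mpr hyZ)
      have : x = (γ * k * h * γ⁻¹)⁻¹ * (γ * (h * y * h⁻¹) * γ⁻¹) * (γ * k * h * γ⁻¹) := by
        rw [← hx']; group
      rw [this]
      calc (γ * k * h * γ⁻¹)⁻¹ * (γ * (h * y * h⁻¹) * γ⁻¹) * (γ * k * h * γ⁻¹)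
          = γ * h⁻¹ * (k⁻¹ * ((h * y * h⁻¹) * k)) * h * γ⁻¹ := by group
        _ = γ * h⁻¹ * (k⁻¹ * (k * (h * y * h⁻¹))) * h * γ⁻¹ := by rw [comm]
        _ = γ * y * γ⁻¹ := by group
end

section
/- Let π be a group whose center Z_π(π) is trivial. Then for every γ ∈ π the subgroup H_{γ,e} = (γ,e)·Δ(π)·(γ⁻¹,e) is self-normalizing in π × π, i.e. N_{π×π}(H_{γ,e}) = H_{γ,e}. In particular, condition (NM_{F₁⊆D}) holds for π × π. -/
/-- The family of subgroups of `G` generated by a set `H` of subgroups: all conjugates of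
members of `H` together with all their subgroups. -/
def famGen {G : Type*} [Group G] (H : Set (Subgroup G)) : Set (Subgroup G) :=
  {K | ∃ M ∈ H, ∃ g : G, K ≤ Subgroup.map (MulAut.conj g).toMonoidHom M}

/-- The family `D = F⟨Δ(π)⟩` of subgroups of `π × π`. -/
def famD (π : Type*) [Group π] : Set (Subgroup (π × π)) :=
  famGen {Subgroup.map (diagHom π) ⊤}

/-- The family `F₁ = F⟨{H_{γ,b} | γ ∈ π, b ∈ π∖{e}}⟩` of subgroups of `π × π`. -/
def famF1 (π : Type*) [Group π] : Set (Subgroup (π × π)) :=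
  famGen {K | ∃ γ b : π, b ≠ 1 ∧ K = Hsub γ ({b} : Set π)}

/-- Condition `(NM_{E⊆F})`: every maximal element of `F∖E` is self-normalizing. -/
def conditionNM {G : Type*} [Group G] (E F : Set (Subgroup G)) : Prop :=
  ∀ M ∈ F \ E, (∀ L ∈ F \ E, M ≤ L → M = L) → Subgroup.normalizer (M : Set G) = M
lemma mem_Hsub_one {π : Type*} [Group π] (γ : π) (p : π × π) :
    p ∈ Hsub γ ({1} : Set π) ↔ p.1 = γ * p.2 * γ⁻¹ := by
  simp only [Hsub, Subgroup.mem_map, diagHom, Subgroup.mem_centralizer_iff]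
  constructor
  · rintro ⟨q, ⟨x, hx, rfl⟩, rfl⟩
    simp [MulAut.conj_apply, Prod.ext_iff, mul_assoc]
  · intro h
    refine ⟨(p.2, p.2), ⟨p.2, by simp, rfl⟩, ?_⟩
    simp [MulAut.conj_apply, Prod.ext_iff, h.symm]

lemma conj_diag_eq {π : Type*} [Group π] (g : π × π) :
    Subgroup.map (MulAut.conj g).toMonoidHom (Subgroup.map (diagHom π) ⊤)
      = Hsub (g.1 * g.2⁻¹) ({1} : Set π) := by
  ext p
  rw [mem_Hsub_one]
  simp only [Subgroup.mem_map, diagHom]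
  constructor
  · rintro ⟨q, ⟨x, -, rfl⟩, rfl⟩
    simp [MulAut.conj_apply, Prod.ext_iff, mul_assoc]
  · intro h
    refine ⟨(g.2⁻¹ * p.2 * g.2, g.2⁻¹ * p.2 * g.2), ⟨_, trivial, rfl⟩, Prod.ext ?_ ?_⟩
    · show g.1 * (g.2⁻¹ * p.2 * g.2) * g.1⁻¹ = p.1
      rw [h]; group
    · show g.2 * (g.2⁻¹ * p.2 * g.2) * g.2⁻¹ = p.2
      group

lemma Hsub_one_self_normalizing {π : Type*} [Group π]
    (hc : Subgroup.center π = ⊥) (γ : π) :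
    Subgroup.normalizer (Hsub γ ({1} : Set π) : Set (π × π)) = Hsub γ ({1} : Set π) := by
  refine le_antisymm ?_ Subgroup.le_normalizer
  intro p hp
  rw [Subgroup.mem_normalizer_iff] at hp
  rw [mem_Hsub_one]
  have key : ∀ x : π, p.1 * (γ * x * γ⁻¹) * p.1⁻¹ = γ * (p.2 * x * p.2⁻¹) * γ⁻¹ := by
    intro x
    have := (hp (γ * x * γ⁻¹, x)).mp (by rw [mem_Hsub_one])
    rw [mem_Hsub_one] at this
    simpa using this
  have hcen : (p.2⁻¹ * (γ⁻¹ * p.1 * γ)) ∈ Subgroup.center π := by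
    rw [Subgroup.mem_center_iff]
    intro x
    have h := key x
    have : (γ⁻¹ * p.1 * γ) * x * (γ⁻¹ * p.1 * γ)⁻¹ = p.2 * x * p.2⁻¹ := by
      have := congrArg (fun y => γ⁻¹ * y * γ) h
      rw [show γ⁻¹ * (p.1 * (γ * x * γ⁻¹) * p.1⁻¹) * γ
          = (γ⁻¹ * p.1 * γ) * x * (γ⁻¹ * p.1 * γ)⁻¹ by group] at this
      rw [this]; group
    have h2 : x * (p.2⁻¹ * (γ⁻¹ * p.1 * γ)) = (p.2⁻¹ * (γ⁻¹ * p.1 * γ)) * x := by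
      have := congrArg (fun y => p.2⁻¹ * y * (γ⁻¹ * p.1 * γ)) this
      calc x * (p.2⁻¹ * (γ⁻¹ * p.1 * γ))
          = p.2⁻¹ * (p.2 * x * p.2⁻¹) * (γ⁻¹ * p.1 * γ) := by group
        _ = p.2⁻¹ * ((γ⁻¹ * p.1 * γ) * x * (γ⁻¹ * p.1 * γ)⁻¹) * (γ⁻¹ * p.1 * γ) := by
            rw [this]
        _ = (p.2⁻¹ * (γ⁻¹ * p.1 * γ)) * x := by group
    exact h2
  rw [hc, Subgroup.mem_bot] at hcen
  have : γ⁻¹ * p.1 * γ = p.2 := by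
    have := mul_eq_one_iff_inv_eq.mp hcen
    rw [← this]; simp
  rw [← this]; group

/-- If the center of `π` is trivial, then every `H_{γ,e} = (γ,e)·Δ(π)·(γ⁻¹,e)` is
self-normalizing in `π × π`; in particular condition `(NM_{F₁⊆D})` holds for `π × π`. -/
theorem selfNormalizing_of_trivialCenter {π : Type*} [Group π]
    (hc : Subgroup.center π = ⊥) :
    (∀ γ : π, Subgroup.normalizer (Hsub γ ({1} : Set π) : Set (π × π)) = Hsub γ ({1} : Set π)) ∧
      conditionNM (famF1 π) (famD π) := by
  refine ⟨Hsub_one_self_normalizing hc, ?_⟩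
  intro M hM hmax
  obtain ⟨⟨N, hN, g, hle⟩, hMF1⟩ := hM
  rw [Set.mem_singleton_iff] at hN
  subst hN
  rw [conj_diag_eq] at hle
  set H := Hsub (g.1 * g.2⁻¹) ({1} : Set π) with hH
  have hHD : H ∈ famD π := ⟨_, rfl, g, le_of_eq (conj_diag_eq g).symm⟩
  have hHF1 : H ∉ famF1 π := by
    intro ⟨K, hK, g', hle'⟩
    exact hMF1 ⟨K, hK, g', hle.trans hle'⟩
  have := hmax H ⟨hHD, hHF1⟩ hle
  rw [this]
  exact Hsub_one_self_normalizing hc _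
end

section
/- Let π be a group as in the Setup. Then for all b, c ∈ π∖{e}, either Z_π(b) = Z_π(c) or Z_π(b) ∩ Z_π(c) = {e}. -/
/-- A family `P` of subgroups of `π` is a malnormal collection if for all `i, j` and `g ∈ π`,
either `gP_ig⁻¹ ∩ P_j = {e}`, or `i = j` and `g ∈ P_i`. -/
def IsMalnormalCollection {π : Type*} [Group π] {I : Type*} (P : I → Subgroup π) : Prop :=
  ∀ i j : I, ∀ g : π,
    Subgroup.map (MulAut.conj g).toMonoidHom (P i) ⊓ P j = ⊥ ∨ (i = j ∧ g ∈ P i)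

/-- A monoid is torsion-free if no nontrivial element has finite order
(the definition of `Monoid.IsTorsionFree` in the older Mathlib). -/
def Monoid.IsTorsionFree (G : Type*) [Monoid G] : Prop :=
  ∀ g : G, g ≠ 1 → ¬IsOfFinOrder g

/-- Key lemma: under the hypotheses, the centralizer of any nontrivial element is abelian. -/
lemma centralizer_comm_aux {π : Type*} [Group π] {I : Type*} (P : I → Subgroup π)
    (hmal : IsMalnormalCollection P)
    (hab : ∀ i : I, IsMulCommutative (P i))
    (hcyc : ∀ b : π, (¬ ∃ (i : I) (g : π), g * b * g⁻¹ ∈ P i) →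
      IsCyclic (Subgroup.centralizer ({b} : Set π)))
    {b : π} (hb : b ≠ 1) {x y : π}
    (hx : x ∈ Subgroup.centralizer ({b} : Set π))
    (hy : y ∈ Subgroup.centralizer ({b} : Set π)) : x * y = y * x := by
  by_cases h : ∃ (i : I) (g : π), g * b * g⁻¹ ∈ P i
  · obtain ⟨i, g, hg⟩ := h
    -- every element of the centralizer of b is conjugated into P i by g
    have key : ∀ z : π, z ∈ Subgroup.centralizer ({b} : Set π) → g * z * g⁻¹ ∈ P i := by
      intro z hz
      rcases hmal i i (g * z * g⁻¹) with hbot | ⟨_, hmem⟩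
      · exfalso
        have hzb : z * b = b * z := Subgroup.mem_centralizer_singleton_iff.mp hz
        have hzbz : z * b * z⁻¹ = b := by rw [hzb]; group
        have hconj : (MulAut.conj (g * z * g⁻¹)).toMonoidHom (g * b * g⁻¹) = g * b * g⁻¹ := by
          simp only [MulEquiv.coe_toMonoidHom, MulAut.conj_apply]
          calc (g * z * g⁻¹) * (g * b * g⁻¹) * (g * z * g⁻¹)⁻¹
              = g * (z * b * z⁻¹) * g⁻¹ := by group
            _ = g * b * g⁻¹ := by rw [hzbz]
        have hmem1 : g * b * g⁻¹ ∈
            Subgroup.map (MulAut.conj (g * z * g⁻¹)).toMonoidHom (P i) ⊓ P i := by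
          refine ⟨⟨g * b * g⁻¹, hg, hconj⟩, hg⟩
        rw [hbot] at hmem1
        have : g * b * g⁻¹ = 1 := hmem1
        apply hb
        have := congrArg (fun w => g⁻¹ * w * g) this
        simpa [mul_assoc] using this
      · exact hmem
    have hx' := key x hx
    have hy' := key y hy
    have hcomm : (g * x * g⁻¹) * (g * y * g⁻¹) = (g * y * g⁻¹) * (g * x * g⁻¹) := by
      haveI := hab i
      exact Subgroup.mul_comm_of_mem_isMulCommutative _ hx' hy'
    have : g * (x * y) * g⁻¹ = g * (y * x) * g⁻¹ := by
      calc g * (x * y) * g⁻¹ = (g * x * g⁻¹) * (g * y * g⁻¹) := by group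
        _ = (g * y * g⁻¹) * (g * x * g⁻¹) := hcomm
        _ = g * (y * x) * g⁻¹ := by group
    have := congrArg (fun w => g⁻¹ * w * g) this
    simpa [mul_assoc] using this
  · obtain ⟨gen, hgen⟩ := (hcyc b h).exists_generator
    obtain ⟨m, hm⟩ := hgen ⟨x, hx⟩
    obtain ⟨n, hn⟩ := hgen ⟨y, hy⟩
    have hmx : (gen : π) ^ m = x := by
      rw [← SubgroupClass.coe_zpow]; exact congrArg Subtype.val hm
    have hny : (gen : π) ^ n = y := by
      rw [← SubgroupClass.coe_zpow]; exact congrArg Subtype.val hn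
    rw [← hmx, ← hny, ← zpow_add, ← zpow_add, add_comm]

/-- For `b ≠ 1` and a nontrivial `x` in the centralizer of `b`, the two centralizers agree. -/
lemma centralizer_eq_of_mem_aux {π : Type*} [Group π] {I : Type*} (P : I → Subgroup π)
    (hmal : IsMalnormalCollection P)
    (hab : ∀ i : I, IsMulCommutative (P i))
    (hcyc : ∀ b : π, (¬ ∃ (i : I) (g : π), g * b * g⁻¹ ∈ P i) →
      IsCyclic (Subgroup.centralizer ({b} : Set π)))
    {b x : π} (hb : b ≠ 1) (hx1 : x ≠ 1)
    (hx : x ∈ Subgroup.centralizer ({b} : Set π)) :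
    Subgroup.centralizer ({b} : Set π) = Subgroup.centralizer ({x} : Set π) := by
  have hle : ∀ (b x : π), b ≠ 1 → x ∈ Subgroup.centralizer ({b} : Set π) →
      Subgroup.centralizer ({b} : Set π) ≤ Subgroup.centralizer ({x} : Set π) := by
    intro b x hb hx y hy
    exact Subgroup.mem_centralizer_singleton_iff.mpr
      (centralizer_comm_aux P hmal hab hcyc hb hy hx)
  have hbx : b ∈ Subgroup.centralizer ({x} : Set π) := by
    rw [Subgroup.mem_centralizer_singleton_iff]
    exact (Subgroup.mem_centralizer_singleton_iff.mp hx).symm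
  exact le_antisymm (hle b x hb hx) (hle x b hx1 hbx)

/-- For a group `π` as in the Setup (torsionfree, with a malnormal collection of abelian
subgroups `P_i` such that `Z_π(b)` is cyclic for every `b` not conjugate into any `P_i`):
for all `b, c ≠ e`, either `Z_π(b) = Z_π(c)` or `Z_π(b) ∩ Z_π(c) = {e}`. -/
theorem centralizers_eq_or_disjoint {π : Type*} [Group π] {I : Type*} (P : I → Subgroup π)
    (htf : Monoid.IsTorsionFree π)
    (hmal : IsMalnormalCollection P)
    (hab : ∀ i : I, IsMulCommutative (P i))
    (hcyc : ∀ b : π, (¬ ∃ (i : I) (g : π), g * b * g⁻¹ ∈ P i) →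
      IsCyclic (Subgroup.centralizer ({b} : Set π))) :
    ∀ b c : π, b ≠ 1 → c ≠ 1 →
      Subgroup.centralizer ({b} : Set π) = Subgroup.centralizer ({c} : Set π) ∨
      Subgroup.centralizer ({b} : Set π) ⊓ Subgroup.centralizer ({c} : Set π) = ⊥ := by
  intro b c hb hc
  rcases (Subgroup.centralizer ({b} : Set π) ⊓
      Subgroup.centralizer ({c} : Set π)).bot_or_exists_ne_one with hbot | ⟨x, hx, hx1⟩
  · exact Or.inr hbot
  · left
    have hxb : x ∈ Subgroup.centralizer ({b} : Set π) := hx.1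
    have hxc : x ∈ Subgroup.centralizer ({c} : Set π) := hx.2
    rw [centralizer_eq_of_mem_aux P hmal hab hcyc hb hx1 hxb,
      centralizer_eq_of_mem_aux P hmal hab hcyc hc hx1 hxc]
end

section
/- Let π be a group as in the Setup. Then for every b ∈ π∖{e}, the centralizer Z_π(b) is self-normalizing: N_π(Z_π(b)) = Z_π(b). -/
private lemma tf_zpow {π : Type*} [Group π] (htf : ∀ g : π, g ≠ 1 → ¬IsOfFinOrder g)
    {x : π} {m : ℤ} (hx : x ≠ 1) (h : x ^ m = 1) : m = 0 := by
  by_contra hm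
  exact htf x hx (isOfFinOrder_iff_zpow_eq_one.2 ⟨m, hm, h⟩)

/-- For a group `π` as in the Setup, every centralizer `Z_π(b)` of a nontrivial element `b`
is self-normalizing: `N_π(Z_π(b)) = Z_π(b)`. -/
theorem centralizer_selfNormalizing {π : Type*} [Group π] {I : Type*} (P : I → Subgroup π)
    (htf : ∀ g : π, g ≠ 1 → ¬IsOfFinOrder g)
    (hmal : IsMalnormalCollection P)
    (hab : ∀ i : I, IsMulCommutative (P i))
    (hcyc : ∀ b : π, (¬ ∃ (i : I) (g : π), g * b * g⁻¹ ∈ P i) →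
      IsCyclic (Subgroup.centralizer ({b} : Set π))) :
    ∀ b : π, b ≠ 1 →
      Subgroup.normalizer (Subgroup.centralizer ({b} : Set π) : Set π) = Subgroup.centralizer ({b} : Set π) := by
  intro b hb
  set Z := Subgroup.centralizer ({b} : Set π) with hZ
  have memZ : ∀ a : π, a ∈ Z ↔ b * a = a * b := by
    intro a
    rw [hZ, Subgroup.mem_centralizer_iff]
    constructor
    · intro h; exact h b rfl
    · rintro h y rfl; exact h
  have hbZ : b ∈ Z := (memZ b).2 rfl
  refine le_antisymm ?_ (Subgroup.le_normalizer)
  by_cases hconj : ∃ (i : I) (g : π), g * b * g⁻¹ ∈ P i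
  · -- Case 1: b conjugate into some P i
    obtain ⟨i, g, hc⟩ := hconj
    set c := g * b * g⁻¹ with hcdef
    have hbc : b = g⁻¹ * c * g := by rw [hcdef]; group
    have hcne : c ≠ 1 := by
      intro h
      apply hb
      rw [hbc, h]; group
    -- Z = g⁻¹ (P i) g
    have hZP : ∀ a : π, a ∈ Z ↔ g * a * g⁻¹ ∈ P i := by
      intro a
      constructor
      · intro ha
        have hcomm : (g * a * g⁻¹) * c * (g * a * g⁻¹)⁻¹ = c := by
          have hba := (memZ a).1 ha
          have h2 : a * b * a⁻¹ = b := by rw [← hba]; group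
          rw [hcdef]
          calc (g * a * g⁻¹) * (g * b * g⁻¹) * (g * a * g⁻¹)⁻¹
              = g * (a * b * a⁻¹) * g⁻¹ := by group
            _ = g * b * g⁻¹ := by rw [h2]
        rcases hmal i i (g * a * g⁻¹) with hbot | ⟨_, hmem⟩
        · exfalso
          apply hcne
          have hcmem : c ∈ Subgroup.map (MulAut.conj (g * a * g⁻¹)).toMonoidHom (P i) ⊓ P i := by
            refine ⟨Subgroup.mem_map.2 ⟨c, hc, ?_⟩, hc⟩
            simpa [MulAut.conj_apply, mul_assoc] using hcomm
          rw [hbot] at hcmem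
          exact Subgroup.mem_bot.1 hcmem
        · exact hmem
      · intro ha
        apply (memZ a).2
        have hcomm : (g * a * g⁻¹) * c = c * (g * a * g⁻¹) :=
          Subgroup.mul_comm_of_mem_isMulCommutative (P i) ha hc
        calc b * a = g⁻¹ * c * (g * a * g⁻¹) * g := by rw [hbc]; group
          _ = g⁻¹ * ((g * a * g⁻¹) * c) * g := by rw [hcomm]; group
          _ = a * b := by rw [hbc]; group
    intro n hn
    rw [Subgroup.mem_normalizer_iff] at hn
    -- n⁻¹ b n ∈ Z
    have h1 : n⁻¹ * b * n ∈ Z := by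
      refine (hn (n⁻¹ * b * n)).2 ?_
      have : n * (n⁻¹ * b * n) * n⁻¹ = b := by group
      rw [this]; exact hbZ
    have h2 : g * (n⁻¹ * b * n) * g⁻¹ ∈ P i := (hZP _).1 h1
    -- gng⁻¹ conjugates the element above to c
    have key : (g * n * g⁻¹) * (g * (n⁻¹ * b * n) * g⁻¹) * (g * n * g⁻¹)⁻¹ = c := by
      rw [hcdef]; group
    rcases hmal i i (g * n * g⁻¹) with hbot | ⟨_, hmem⟩
    · exfalso
      apply hcne
      have hcmem : c ∈ Subgroup.map (MulAut.conj (g * n * g⁻¹)).toMonoidHom (P i) ⊓ P i := by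
        refine ⟨Subgroup.mem_map.2 ⟨_, h2, ?_⟩, hc⟩
        simpa [MulAut.conj_apply, mul_assoc] using key
      rw [hbot] at hcmem
      exact Subgroup.mem_bot.1 hcmem
    · exact (hZP n).2 hmem
  · -- Case 2: centralizer is cyclic
    have hcy := hcyc b hconj
    obtain ⟨x₀, hx₀⟩ := hcy.exists_generator
    set x : π := (x₀ : π) with hxdef
    have hxZ : x ∈ Z := x₀.2
    -- b is a power of x
    obtain ⟨k, hk⟩ := hx₀ ⟨b, hbZ⟩
    have hbk : x ^ k = b := by
      have := congrArg (Subtype.val) hk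
      simpa using this
    have hxne : x ≠ 1 := by
      intro h
      apply hb
      rw [← hbk, h, one_zpow]
    intro n hn
    rw [Subgroup.mem_normalizer_iff] at hn
    have hnx : n * x * n⁻¹ ∈ Z := (hn x).1 hxZ
    have hnx' : n⁻¹ * x * n ∈ Z := by
      refine (hn (n⁻¹ * x * n)).2 ?_
      have : n * (n⁻¹ * x * n) * n⁻¹ = x := by group
      rw [this]; exact hxZ
    obtain ⟨a, ha⟩ := hx₀ ⟨n * x * n⁻¹, hnx⟩
    obtain ⟨c, hcval⟩ := hx₀ ⟨n⁻¹ * x * n, hnx'⟩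
    have ha' : x ^ a = n * x * n⁻¹ := by
      have := congrArg (Subtype.val) ha; simpa using this
    have hc' : x ^ c = n⁻¹ * x * n := by
      have := congrArg (Subtype.val) hcval; simpa using this
    -- x = x ^ (a * c)
    have hac : x ^ (a * c) = x := by
      calc x ^ (a * c) = (x ^ c) ^ a := by rw [← zpow_mul, mul_comm]
        _ = (n⁻¹ * x * n) ^ a := by rw [hc']
        _ = n⁻¹ * x ^ a * n := by
              rw [show n⁻¹ * x * n = n⁻¹ * x * n⁻¹⁻¹ by rw [inv_inv],
                conj_zpow, inv_inv]
        _ = n⁻¹ * (n * x * n⁻¹) * n := by rw [ha']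
        _ = x := by group
    have hac1 : a * c = 1 := by
      have : x ^ (a * c - 1) = 1 := by
        rw [zpow_sub, hac, zpow_one, mul_inv_cancel]
      have := tf_zpow htf hxne this
      omega
    have haunit : a = 1 ∨ a = -1 := Int.isUnit_iff.1 (IsUnit.of_mul_eq_one c hac1)
    rcases haunit with h1 | h1
    · -- n commutes with x, hence with b
      have hcx : n * x = x * n := by
        have h' := ha'; rw [h1, zpow_one] at h'
        calc n * x = (n * x * n⁻¹) * n := by group
          _ = x * n := by rw [← h']

      apply (memZ n).2
      have hC : Commute n x := hcx
      have : n * b = b * n := by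
        rw [← hbk]
        exact (hC.zpow_right k).eq
      exact this.symm
    · -- n x n⁻¹ = x⁻¹ ; then n² ∈ Z and torsionfreeness forces n = 1
      exfalso
      have hinv : n * x * n⁻¹ = x⁻¹ := by rw [← ha', h1, zpow_neg_one]
      -- n*n commutes with x
      have hinv' : n * x⁻¹ * n⁻¹ = x := by
        calc n * x⁻¹ * n⁻¹ = (n * x * n⁻¹)⁻¹ := by group
          _ = x := by rw [hinv]; group
      have hn2x : (n * n) * x * (n * n)⁻¹ = x := by
        calc (n * n) * x * (n * n)⁻¹ = n * (n * x * n⁻¹) * n⁻¹ := by group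
          _ = n * x⁻¹ * n⁻¹ := by rw [hinv]
          _ = x := hinv'
      have hn2Z : n * n ∈ Z := by
        apply (memZ _).2
        have hcx : (n * n) * x = x * (n * n) := by
          calc (n * n) * x = ((n * n) * x * (n * n)⁻¹) * (n * n) := by group
            _ = x * (n * n) := by rw [hn2x]
        have hC : Commute (n * n) x := hcx
        rw [← hbk]
        exact ((hC.zpow_right k).eq).symm
      obtain ⟨m, hm⟩ := hx₀ ⟨n * n, hn2Z⟩
      have hm' : x ^ m = n * n := by
        have := congrArg (Subtype.val) hm; simpa using this
      -- conjugating n*n by n gives both n*n and x^(-m)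
      have hid : n * (n * n) * n⁻¹ = n * n := by group
      have hcontra : x ^ m = x ^ (-m) := by
        calc x ^ m = n * (n * n) * n⁻¹ := by rw [hm', hid]
          _ = n * x ^ m * n⁻¹ := by rw [hm']
          _ = (n * x * n⁻¹) ^ m := by rw [conj_zpow]
          _ = (x⁻¹) ^ m := by rw [hinv]
          _ = x ^ (-m) := by rw [inv_zpow, zpow_neg]
      have h2m : x ^ (2 * m) = 1 := by
        have hmm : x ^ m * x ^ m = 1 := by
          nth_rewrite 2 [hcontra]
          rw [← zpow_add]; simp
        rw [two_mul, zpow_add]; exact hmm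
      have hm0 : m = 0 := by
        have := tf_zpow htf hxne h2m
        omega
      have hn2 : n * n = 1 := by
        rw [← hm', hm0, zpow_zero]
      have hn1 : n = 1 := by
        by_contra hne
        refine htf n hne (isOfFinOrder_iff_zpow_eq_one.2 ⟨2, by norm_num, ?_⟩)
        rw [show (2:ℤ) = 1 + 1 by norm_num, zpow_add, zpow_one]
        exact hn2
      rw [hn1] at hinv
      apply hxne
      have hxx : x = x⁻¹ := by rw [← hinv]; group
      have hx2 : x ^ (2:ℤ) = 1 := by
        have h' : x * x = 1 := by nth_rewrite 2 [hxx]; simp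
        rw [show (2:ℤ) = 1 + 1 by norm_num, zpow_add, zpow_one]
        exact h'
      exact absurd (tf_zpow htf hxne hx2) (by norm_num)
end

section
/- Let π be a group as in the Setup. Then for every b ∈ π∖{e}, the centralizer Z_π(b) is abelian and Z_π(Z_π(b)) = Z_π(b), where Z_π(Z_π(b)) denotes the centralizer in π of the subgroup Z_π(b). -/
/-- For a group `π` as in the Setup, for every `b ≠ e` the centralizer `Z_π(b)` is abelian
and `Z_π(Z_π(b)) = Z_π(b)`. -/
theorem centralizer_abelian_and_bicentralizer {π : Type*} [Group π] {I : Type*}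
    (P : I → Subgroup π)
    (htf : Monoid.IsTorsionFree π)
    (hmal : IsMalnormalCollection P)
    (hab : ∀ i : I, IsMulCommutative (P i))
    (hcyc : ∀ b : π, (¬ ∃ (i : I) (g : π), g * b * g⁻¹ ∈ P i) →
      IsCyclic (Subgroup.centralizer ({b} : Set π))) :
    ∀ b : π, b ≠ 1 →
      IsMulCommutative (Subgroup.centralizer ({b} : Set π)) ∧
      Subgroup.centralizer ((Subgroup.centralizer ({b} : Set π) : Subgroup π) : Set π) =
        Subgroup.centralizer ({b} : Set π) := by
  intro b hb
  have hcomm : IsMulCommutative (Subgroup.centralizer ({b} : Set π)) := by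
    by_cases hconj : ∃ (i : I) (g : π), g * b * g⁻¹ ∈ P i
    · obtain ⟨i, g, hg⟩ := hconj
      -- every element of the centralizer, conjugated by g, lies in P i
      have key : ∀ x : π, x ∈ Subgroup.centralizer ({b} : Set π) → g * x * g⁻¹ ∈ P i := by
        intro x hx
        have hxb : x * b = b * x := Subgroup.mem_centralizer_singleton_iff.mp hx
        rcases hmal i i (g * x * g⁻¹) with h | h
        · exfalso
          have hp : (g * b * g⁻¹) ∈
              Subgroup.map (MulAut.conj (g * x * g⁻¹)).toMonoidHom (P i) ⊓ P i := by
            refine ⟨⟨g * b * g⁻¹, hg, ?_⟩, hg⟩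
            show (g * x * g⁻¹) * (g * b * g⁻¹) * (g * x * g⁻¹)⁻¹ = g * b * g⁻¹
            have : g * x * g⁻¹ * (g * b * g⁻¹) * (g * x * g⁻¹)⁻¹
                = g * (x * b * x⁻¹) * g⁻¹ := by group
            rw [this, hxb]
            group
          rw [h, Subgroup.mem_bot] at hp
          apply hb
          have := congrArg (fun y => g⁻¹ * y * g) hp
          simpa [mul_assoc] using this
        · exact h.2
      constructor
      constructor
      rintro ⟨x, hx⟩ ⟨y, hy⟩
      have hx' := key x hx
      have hy' := key y hy
      have := Subgroup.mul_comm_of_mem_isMulCommutative (H := P i) hx' hy'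
      have hxy : x * y = y * x := by
        have h2 : g * (x * y) * g⁻¹ = g * (y * x) * g⁻¹ := by
          have e1 : g * x * g⁻¹ * (g * y * g⁻¹) = g * (x * y) * g⁻¹ := by group
          have e2 : g * y * g⁻¹ * (g * x * g⁻¹) = g * (y * x) * g⁻¹ := by group
          rw [← e1, ← e2, this]
        have := congrArg (fun z => g⁻¹ * z * g) h2
        simpa [mul_assoc] using this
      exact Subtype.ext hxy
    · have hc := hcyc b hconj
      constructor
      constructor
      intro x y
      obtain ⟨z, hz⟩ := hc.exists_generator
      obtain ⟨m, hm⟩ := hz x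
      obtain ⟨n, hn⟩ := hz y
      rw [← hm, ← hn, ← zpow_add, ← zpow_add, add_comm]
  refine ⟨hcomm, ?_⟩
  apply le_antisymm
  · apply Subgroup.centralizer_le
    intro x hx
    rw [Set.mem_singleton_iff] at hx
    subst hx
    exact Subgroup.mem_centralizer_singleton_iff.mpr rfl
  · intro x hx
    rw [Subgroup.mem_centralizer_iff]
    intro h hh
    exact (Subgroup.mul_comm_of_mem_isMulCommutative (H := Subgroup.centralizer ({b} : Set π))
      hx hh).symm
end

section
/- Let π be a group as in the Setup. If H is a nontrivial subgroup of π such that H ≤ Z_π(b) for some b ∈ π∖{e}, then there is exactly one subgroup of π of the form Z_π(c) with c ∈ π∖{e} that contains H. Consequently, conditions (M_{TR⊆F⟨Z⟩}) and (NM_{TR⊆F⟨Z⟩}) hold for π, where F⟨Z⟩ := F⟨{Z_π(b) | b ∈ π∖{e}}⟩. -/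
/-- Condition `(M_{E⊆F})`: every element of `F∖E` is contained in a unique element of `F∖E`
which is maximal in `F∖E` with respect to inclusion. -/
def conditionM {G : Type*} [Group G] (E F : Set (Subgroup G)) : Prop :=
  ∀ H ∈ F \ E, ∃! M : Subgroup G,
    M ∈ F \ E ∧ H ≤ M ∧ ∀ L ∈ F \ E, M ≤ L → M = L

section aux
variable {π : Type*} [Group π] {I : Type*} {P : I → Subgroup π}

lemma mem_cent {b x : π} : x ∈ Subgroup.centralizer ({b} : Set π) ↔ Commute b x := by
  rw [Subgroup.mem_centralizer_singleton_iff]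
  constructor <;> intro h <;> exact h.symm

lemma conj_ne_one {g b : π} (hb : b ≠ 1) : g * b * g⁻¹ ≠ 1 := by
  intro h
  apply hb
  have := congrArg (fun t => g⁻¹ * t * g) h
  simpa [mul_assoc] using this

lemma conj_cent (g b : π) :
    Subgroup.map (MulAut.conj g).toMonoidHom (Subgroup.centralizer ({b} : Set π)) =
      Subgroup.centralizer ({g * b * g⁻¹} : Set π) := by
  ext x
  simp only [Subgroup.mem_map, MulEquiv.coe_toMonoidHom, MulAut.conj_apply]
  constructor
  · rintro ⟨y, hy, rfl⟩
    rw [Subgroup.mem_centralizer_singleton_iff] at hy ⊢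
    calc g * y * g⁻¹ * (g * b * g⁻¹) = g * (y * b) * g⁻¹ := by group
    _ = g * (b * y) * g⁻¹ := by rw [hy]
    _ = g * b * g⁻¹ * (g * y * g⁻¹) := by group
  · intro hx
    refine ⟨g⁻¹ * x * g, ?_, by group⟩
    rw [Subgroup.mem_centralizer_singleton_iff] at hx ⊢
    have := congrArg (fun t => g⁻¹ * t * g) hx
    simpa [mul_assoc] using this

lemma zpow_eq_zero_tf (htf : ∀ g : π, g ≠ 1 → ¬IsOfFinOrder g) {z : π} (hz : z ≠ 1) {n : ℤ}
    (h : z ^ n = 1) : n = 0 := by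
  have ho : orderOf z = 0 := orderOf_eq_zero_iff.2 (htf z hz)
  have := orderOf_dvd_iff_zpow_eq_one.2 h
  rw [ho] at this
  exact_mod_cast zero_dvd_iff.mp (by exact_mod_cast this)

lemma conj_mem_of_cent (hmal : IsMalnormalCollection P)
    {i : I} {g b : π} (hb : b ≠ 1) (hbP : g * b * g⁻¹ ∈ P i) {x : π}
    (hx : x ∈ Subgroup.centralizer ({b} : Set π)) : g * x * g⁻¹ ∈ P i := by
  rcases hmal i i (g * x * g⁻¹) with h | h
  · exfalso
    rw [mem_cent] at hx
    have hxb : x * b * x⁻¹ = b := by rw [hx.symm.eq, mul_inv_cancel_right]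
    have hmem : g * b * g⁻¹ ∈
        Subgroup.map (MulAut.conj (g * x * g⁻¹)).toMonoidHom (P i) ⊓ P i := by
      refine ⟨⟨g * b * g⁻¹, hbP, ?_⟩, hbP⟩
      simp only [MulEquiv.coe_toMonoidHom, MulAut.conj_apply]
      calc (g * x * g⁻¹) * (g * b * g⁻¹) * (g * x * g⁻¹)⁻¹
            = g * (x * b * x⁻¹) * g⁻¹ := by group
        _ = g * b * g⁻¹ := by rw [hxb]
    rw [h, Subgroup.mem_bot] at hmem
    exact conj_ne_one hb hmem
  · exact h.2

lemma cent_comm (hmal : IsMalnormalCollection P) (hab : ∀ i : I, IsMulCommutative (P i))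
    (hcyc : ∀ b : π, (¬ ∃ (i : I) (g : π), g * b * g⁻¹ ∈ P i) →
      IsCyclic (Subgroup.centralizer ({b} : Set π)))
    {b : π} (hb : b ≠ 1) {x y : π}
    (hx : x ∈ Subgroup.centralizer ({b} : Set π))
    (hy : y ∈ Subgroup.centralizer ({b} : Set π)) : Commute x y := by
  by_cases hc : ∃ (i : I) (g : π), g * b * g⁻¹ ∈ P i
  · obtain ⟨i, g, hP⟩ := hc
    haveI := hab i
    have hx' := conj_mem_of_cent hmal hb hP hx
    have hy' := conj_mem_of_cent hmal hb hP hy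
    have hcomm : Commute (g * x * g⁻¹) (g * y * g⁻¹) :=
      Subgroup.mul_comm_of_mem_isMulCommutative _ hx' hy'
    have := hcomm.map (MulAut.conj g⁻¹).toMonoidHom
    simpa [MulAut.conj_apply, mul_assoc] using this
  · haveI := hcyc b hc
    letI : CommGroup (Subgroup.centralizer ({b} : Set π)) := IsCyclic.commGroup
    have h2 : (⟨x, hx⟩ : Subgroup.centralizer ({b} : Set π)) * ⟨y, hy⟩
        = ⟨y, hy⟩ * ⟨x, hx⟩ := mul_comm _ _
    exact (by simpa using congrArg Subtype.val h2 : x * y = y * x)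

lemma cent_eq (hmal : IsMalnormalCollection P) (hab : ∀ i : I, IsMulCommutative (P i))
    (hcyc : ∀ b : π, (¬ ∃ (i : I) (g : π), g * b * g⁻¹ ∈ P i) →
      IsCyclic (Subgroup.centralizer ({b} : Set π)))
    {b h : π} (hb : b ≠ 1) (hh : h ≠ 1)
    (hmem : h ∈ Subgroup.centralizer ({b} : Set π)) :
    Subgroup.centralizer ({b} : Set π) = Subgroup.centralizer ({h} : Set π) := by
  apply le_antisymm
  · intro x hx
    exact mem_cent.2 (cent_comm hmal hab hcyc hb hmem hx)
  · intro x hx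
    have hbh : b ∈ Subgroup.centralizer ({h} : Set π) :=
      mem_cent.2 (mem_cent.1 hmem).symm
    exact mem_cent.2 (cent_comm hmal hab hcyc hh hbh hx)

lemma cent_norm (htf : ∀ g : π, g ≠ 1 → ¬IsOfFinOrder g) (hmal : IsMalnormalCollection P)
    (hab : ∀ i : I, IsMulCommutative (P i))
    (hcyc : ∀ b : π, (¬ ∃ (i : I) (g : π), g * b * g⁻¹ ∈ P i) →
      IsCyclic (Subgroup.centralizer ({b} : Set π)))
    {m : π} (hm : m ≠ 1) :
    Subgroup.normalizer ((Subgroup.centralizer ({m} : Set π)) : Set π)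
      = Subgroup.centralizer ({m} : Set π) := by
  refine le_antisymm ?_ Subgroup.le_normalizer
  intro x hx
  rw [Subgroup.mem_normalizer_iff] at hx
  have hmZ : m ∈ Subgroup.centralizer ({m} : Set π) := mem_cent.2 (Commute.refl m)
  by_cases hc : ∃ (i : I) (g : π), g * m * g⁻¹ ∈ P i
  · obtain ⟨i, g, hP⟩ := hc
    haveI := hab i
    have hxm : x * m * x⁻¹ ∈ Subgroup.centralizer ({m} : Set π) := (hx m).1 hmZ
    have key : g * (x * m * x⁻¹) * g⁻¹ ∈ P i := conj_mem_of_cent hmal hm hP hxm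
    rcases hmal i i (g * x * g⁻¹) with h | h
    · exfalso
      have hmem : g * (x * m * x⁻¹) * g⁻¹ ∈
          Subgroup.map (MulAut.conj (g * x * g⁻¹)).toMonoidHom (P i) ⊓ P i := by
        refine ⟨⟨g * m * g⁻¹, hP, ?_⟩, key⟩
        simp only [MulEquiv.coe_toMonoidHom, MulAut.conj_apply]
        group
      rw [h, Subgroup.mem_bot] at hmem
      exact conj_ne_one (conj_ne_one hm) hmem
    · have hcomm : Commute (g * x * g⁻¹) (g * m * g⁻¹) :=
        Subgroup.mul_comm_of_mem_isMulCommutative _ h.2 hP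
      have := hcomm.map (MulAut.conj g⁻¹).toMonoidHom
      have hxm' : Commute x m := by
        simpa [MulAut.conj_apply, mul_assoc] using this
      exact mem_cent.2 hxm'.symm
  · haveI := hcyc m hc
    obtain ⟨⟨z, hzZ⟩, hgen⟩ := IsCyclic.exists_generator
        (α := Subgroup.centralizer ({m} : Set π))
    have hpow : ∀ w ∈ Subgroup.centralizer ({m} : Set π), ∃ k : ℤ, w = z ^ k := by
      intro w hw
      obtain ⟨k, hk⟩ := hgen ⟨w, hw⟩
      exact ⟨k, by simpa using congrArg Subtype.val hk.symm⟩
    have hz1 : z ≠ 1 := by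
      rintro rfl
      obtain ⟨k, hk⟩ := hpow m hmZ
      rw [one_zpow] at hk
      exact hm hk
    have hZeq : Subgroup.centralizer ({m} : Set π)
        = Subgroup.centralizer ({z} : Set π) := cent_eq hmal hab hcyc hm hz1 hzZ
    -- x z x⁻¹ = z ^ n,  x⁻¹ z x = z ^ k
    obtain ⟨n, hn⟩ := hpow _ ((hx z).1 hzZ)
    have hinv : x⁻¹ * z * x ∈ Subgroup.centralizer ({m} : Set π) := by
      apply (hx (x⁻¹ * z * x)).2
      have : x * (x⁻¹ * z * x) * x⁻¹ = z := by group
      rw [this]; exact hzZ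
    obtain ⟨k, hk⟩ := hpow _ hinv
    have hzkn : z = z ^ (k * n) := by
      have h1 : z = x⁻¹ * (x * z * x⁻¹) * x := by group
      rw [hn] at h1
      have h2 : x⁻¹ * z ^ n * x = (x⁻¹ * z * x) ^ n := by
        have := @conj_zpow π _ n x⁻¹ z
        simpa [inv_inv] using this.symm
      rw [h2, hk, ← zpow_mul] at h1
      exact h1
    have hkn1 : k * n = 1 := by
      have h3 : z ^ (k * n - 1) = 1 := by
        rw [zpow_sub, zpow_one, ← hzkn, mul_inv_cancel]
      have := zpow_eq_zero_tf htf hz1 h3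
      omega
    have hn' : n = 1 ∨ n = -1 := by
      have : IsUnit n := IsUnit.of_mul_eq_one (a := n) k (by rw [mul_comm]; exact hkn1)
      exact Int.isUnit_iff.1 this
    rcases hn' with rfl | rfl
    · rw [zpow_one] at hn
      have hcz : Commute z x := by
        have : x * z = z * x := by
          conv_rhs => rw [← hn]
          group
        exact this.symm
      rw [hZeq]
      exact mem_cent.2 hcz
    · rw [zpow_neg_one] at hn
      by_cases hx1 : x = 1
      · rw [hx1]; exact one_mem _
      exfalso
      have hsq : x * x * z * (x * x)⁻¹ = z := by
        calc x * x * z * (x * x)⁻¹ = x * (x * z * x⁻¹) * x⁻¹ := by group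
          _ = x * z⁻¹ * x⁻¹ := by rw [hn]
          _ = (x * z * x⁻¹)⁻¹ := by group
          _ = (z⁻¹)⁻¹ := by rw [hn]
          _ = z := inv_inv z
      have hxxZ : x * x ∈ Subgroup.centralizer ({m} : Set π) := by
        rw [hZeq]
        refine mem_cent.2 ?_
        have : (x * x) * z = z * (x * x) := by
          conv_rhs => rw [← hsq]
          group
        exact this.symm
      obtain ⟨t, ht⟩ := hpow _ hxxZ
      have hconj : x * (x * x) * x⁻¹ = x * x := by group
      have hzt : z ^ (-t) = z ^ t := by
        calc z ^ (-t) = (z⁻¹) ^ t := by rw [zpow_neg, inv_zpow]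
          _ = (x * z * x⁻¹) ^ t := by rw [hn]
          _ = x * z ^ t * x⁻¹ := conj_zpow
          _ = x * (x * x) * x⁻¹ := by rw [← ht]
          _ = x * x := hconj
          _ = z ^ t := ht
      have h2t : z ^ (t + t) = 1 := by
        rw [zpow_add]
        nth_rewrite 1 [← hzt]
        rw [← zpow_add]
        simp
      have ht0 : t = 0 := by
        have := zpow_eq_zero_tf htf hz1 h2t
        omega
      rw [ht0, zpow_zero] at ht
      exact htf x hx1 (isOfFinOrder_iff_pow_eq_one.2 ⟨2, two_pos, by rw [pow_two]; exact ht.symm ▸ ht⟩)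
end aux

section main
variable {π : Type*} [Group π] {I : Type*} {P : I → Subgroup π}

lemma mem_famGen_iff {H : Subgroup π} :
    H ∈ famGen {K | ∃ b : π, b ≠ 1 ∧ K = Subgroup.centralizer ({b} : Set π)} ↔
      ∃ c : π, c ≠ 1 ∧ H ≤ Subgroup.centralizer ({c} : Set π) := by
  constructor
  · rintro ⟨M, ⟨b, hb1, rfl⟩, g, hle⟩
    rw [conj_cent] at hle
    exact ⟨g * b * g⁻¹, conj_ne_one hb1, hle⟩
  · rintro ⟨c, hc1, hle⟩
    refine ⟨_, ⟨c, hc1, rfl⟩, 1, ?_⟩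
    rw [conj_cent]
    simpa using hle

lemma exists_ne_one_of_ne_bot {H : Subgroup π} (h : H ≠ ⊥) : ∃ x ∈ H, x ≠ 1 := by
  obtain ⟨⟨x, hxH⟩, hx1⟩ := Subgroup.ne_bot_iff_exists_ne_one.1 h
  exact ⟨x, hxH, fun e => hx1 (Subtype.ext e)⟩

theorem conditionM_NM_TR_centralizers' (P : I → Subgroup π)
    (htf : ∀ g : π, g ≠ 1 → ¬IsOfFinOrder g)
    (hmal : IsMalnormalCollection P)
    (hab : ∀ i : I, IsMulCommutative (P i))
    (hcyc : ∀ b : π, (¬ ∃ (i : I) (g : π), g * b * g⁻¹ ∈ P i) →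
      IsCyclic (Subgroup.centralizer ({b} : Set π))) :
    (∀ H : Subgroup π, H ≠ ⊥ →
      (∃ b : π, b ≠ 1 ∧ H ≤ Subgroup.centralizer ({b} : Set π)) →
      ∃! K : Subgroup π,
        (∃ c : π, c ≠ 1 ∧ K = Subgroup.centralizer ({c} : Set π)) ∧ H ≤ K) ∧
    conditionM ({⊥} : Set (Subgroup π))
      (famGen {K | ∃ b : π, b ≠ 1 ∧ K = Subgroup.centralizer ({b} : Set π)}) ∧
    conditionNM ({⊥} : Set (Subgroup π))
      (famGen {K | ∃ b : π, b ≠ 1 ∧ K = Subgroup.centralizer ({b} : Set π)}) := by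
  refine ⟨?_, ?_, ?_⟩
  · rintro H hHne ⟨b, hb1, hHb⟩
    obtain ⟨h, hhH, hh1⟩ := exists_ne_one_of_ne_bot hHne
    refine ⟨Subgroup.centralizer ({h} : Set π), ⟨⟨h, hh1, rfl⟩, ?_⟩, ?_⟩
    · intro x hxH
      exact mem_cent.2 (cent_comm hmal hab hcyc hb1 (hHb hhH) (hHb hxH))
    · rintro K ⟨⟨c, hc1, rfl⟩, hHK⟩
      exact cent_eq hmal hab hcyc hc1 hh1 (hHK hhH)
  · rintro H ⟨hF, hnb⟩
    rw [Set.mem_singleton_iff] at hnb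
    obtain ⟨c, hc1, hHc⟩ := mem_famGen_iff.1 hF
    obtain ⟨h, hhH, hh1⟩ := exists_ne_one_of_ne_bot hnb
    have hhZ : h ∈ Subgroup.centralizer ({h} : Set π) := mem_cent.2 (Commute.refl h)
    have hZh_ne : Subgroup.centralizer ({h} : Set π) ≠ ⊥ := by
      intro e
      exact hh1 (Subgroup.mem_bot.1 (e ▸ hhZ))
    have hZh_mem : Subgroup.centralizer ({h} : Set π) ∈
        famGen {K | ∃ b : π, b ≠ 1 ∧ K = Subgroup.centralizer ({b} : Set π)} \
          ({⊥} : Set (Subgroup π)) :=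
      ⟨mem_famGen_iff.2 ⟨h, hh1, le_refl _⟩, by simpa using hZh_ne⟩
    have hHle : H ≤ Subgroup.centralizer ({h} : Set π) := by
      intro x hxH
      exact mem_cent.2 (cent_comm hmal hab hcyc hc1 (hHc hhH) (hHc hxH))
    have hmax : ∀ L ∈ famGen {K | ∃ b : π, b ≠ 1 ∧ K = Subgroup.centralizer ({b} : Set π)} \
        ({⊥} : Set (Subgroup π)), Subgroup.centralizer ({h} : Set π) ≤ L →
        Subgroup.centralizer ({h} : Set π) = L := by
      rintro L ⟨hLF, _⟩ hle
      obtain ⟨c', hc'1, hLc'⟩ := mem_famGen_iff.1 hLF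
      have : Subgroup.centralizer ({c'} : Set π) = Subgroup.centralizer ({h} : Set π) :=
        cent_eq hmal hab hcyc hc'1 hh1 (hLc' (hle hhZ))
      exact le_antisymm hle (le_trans hLc' this.le)
    refine ⟨Subgroup.centralizer ({h} : Set π), ⟨hZh_mem, hHle, hmax⟩, ?_⟩
    rintro M' ⟨⟨hM'F, _⟩, hHM', hM'max⟩
    obtain ⟨c', hc'1, hM'c'⟩ := mem_famGen_iff.1 hM'F
    have hZeq : Subgroup.centralizer ({c'} : Set π) = Subgroup.centralizer ({h} : Set π) :=
      cent_eq hmal hab hcyc hc'1 hh1 (hM'c' (hHM' hhH))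
    exact hM'max _ hZh_mem (le_trans hM'c' hZeq.le)
  · rintro M ⟨hMF, hMnb⟩ hmax
    rw [Set.mem_singleton_iff] at hMnb
    obtain ⟨c, hc1, hMc⟩ := mem_famGen_iff.1 hMF
    obtain ⟨m, hmM, hm1⟩ := exists_ne_one_of_ne_bot hMnb
    have hZeq : Subgroup.centralizer ({c} : Set π) = Subgroup.centralizer ({m} : Set π) :=
      cent_eq hmal hab hcyc hc1 hm1 (hMc hmM)
    have hmZ : m ∈ Subgroup.centralizer ({m} : Set π) := mem_cent.2 (Commute.refl m)
    have hZm_mem : Subgroup.centralizer ({m} : Set π) ∈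
        famGen {K | ∃ b : π, b ≠ 1 ∧ K = Subgroup.centralizer ({b} : Set π)} \
          ({⊥} : Set (Subgroup π)) := by
      refine ⟨mem_famGen_iff.2 ⟨m, hm1, le_refl _⟩, ?_⟩
      simp only [Set.mem_singleton_iff]
      intro e
      exact hm1 (Subgroup.mem_bot.1 (e ▸ hmZ))
    have hMeq : M = Subgroup.centralizer ({m} : Set π) :=
      hmax _ hZm_mem (le_trans hMc hZeq.le)
    rw [hMeq]
    exact cent_norm htf hmal hab hcyc hm1
end main

/-- For a group `π` as in the Setup: every nontrivial subgroup `H` contained in some centralizer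
`Z_π(b)` with `b ≠ e` is contained in exactly one subgroup of the form `Z_π(c)`, `c ≠ e`;
consequently, conditions `(M_{TR⊆F⟨Z⟩})` and `(NM_{TR⊆F⟨Z⟩})` hold for `π`, where
`F⟨Z⟩ = F⟨{Z_π(b) | b ∈ π∖{e}}⟩`. -/
theorem conditionM_NM_TR_centralizers {π : Type*} [Group π] {I : Type*} (P : I → Subgroup π)
    (htf : ∀ g : π, g ≠ 1 → ¬IsOfFinOrder g)
    (hmal : IsMalnormalCollection P)
    (hab : ∀ i : I, IsMulCommutative (P i))
    (hcyc : ∀ b : π, (¬ ∃ (i : I) (g : π), g * b * g⁻¹ ∈ P i) →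
      IsCyclic (Subgroup.centralizer ({b} : Set π))) :
    (∀ H : Subgroup π, H ≠ ⊥ →
      (∃ b : π, b ≠ 1 ∧ H ≤ Subgroup.centralizer ({b} : Set π)) →
      ∃! K : Subgroup π,
        (∃ c : π, c ≠ 1 ∧ K = Subgroup.centralizer ({c} : Set π)) ∧ H ≤ K) ∧
    conditionM ({⊥} : Set (Subgroup π))
      (famGen {K | ∃ b : π, b ≠ 1 ∧ K = Subgroup.centralizer ({b} : Set π)}) ∧
    conditionNM ({⊥} : Set (Subgroup π))
      (famGen {K | ∃ b : π, b ≠ 1 ∧ K = Subgroup.centralizer ({b} : Set π)}) := by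
  exact conditionM_NM_TR_centralizers' P htf hmal hab hcyc
end
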